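/- Let τ be a nonempty index set, φ : τ → τ a self-map, and w : τ → ℂ a weight vector such that σ_{φ,w} maps ℓ²(τ) into ℓ²(τ). Suppose that for every θ ∈ τ: w_θ = 0 whenever φ(φ(θ)) ≠ θ, and w_θ = conj(w_{φ(θ)}) whenever φ(φ(θ)) = θ. Then the bounded operator σ_{φ,w}|_{ℓ²(τ)} is self-adjoint. -/

import Mathlib

/-- If `w_θ = 0` whenever `φ²(θ) ≠ θ` and `w_θ = conj(w_{φ(θ)})` whenever
`φ²(θ) = θ`, then the bounded weighted generalized shift operator `σ_{φ,w}|_{ℓ²(τ)}` is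
self-adjoint. -/
theorem weighted_shift_selfAdjoint_sufficient {τ : Type*} [Nonempty τ] (φ : τ → τ) (w : τ → ℂ)
    (T : lp (fun _ : τ => ℂ) 2 →L[ℂ] lp (fun _ : τ => ℂ) 2)
    (hT : ∀ (x : lp (fun _ : τ => ℂ) 2) (α : τ), T x α = w α * x (φ α))
    (hw : ∀ θ : τ, (φ (φ θ) ≠ θ → w θ = 0) ∧ (φ (φ θ) = θ → w θ = (starRingEnd ℂ) (w (φ θ)))) :
    ContinuousLinearMap.adjoint T = T := by
  symm
  rw [ContinuousLinearMap.eq_adjoint_iff]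
  intro x y
  rw [lp.inner_eq_tsum, lp.inner_eq_tsum]
  simp only [RCLike.inner_apply']
  -- ⟪T x, y⟫ = ∑' α, conj ((T x) α) * y α ; ⟪x, T y⟫ = ∑' α, conj (x α) * (T y) α
  have hφ : ∀ θ : τ, w θ ≠ 0 → φ (φ θ) = θ := fun θ h => by
    by_contra hc; exact h ((hw θ).1 hc)
  have hconj : ∀ θ : τ, w θ ≠ 0 → w θ = (starRingEnd ℂ) (w (φ θ)) := fun θ h =>
    (hw θ).2 (hφ θ h)
  set f : τ → ℂ := fun α => (starRingEnd ℂ) ((T x) α) * y α with hf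
  set g : τ → ℂ := fun α => (starRingEnd ℂ) (x α) * (T y) α with hg
  show ∑' α, f α = ∑' α, g α
  have hfe : ∀ α, f α = (starRingEnd ℂ) (w α) * (starRingEnd ℂ) (x (φ α)) * y α := by
    intro α; simp [hf, hT, map_mul]
  have hge : ∀ α, g α = (starRingEnd ℂ) (x α) * (w α * y (φ α)) := by
    intro α; simp [hg, hT]
  refine tsum_eq_tsum_of_ne_zero_bij (fun b => φ b.1) ?_ ?_ ?_
  · rintro ⟨a, ha⟩ ⟨b, hb⟩ h
    have hwa : w a ≠ 0 := fun h0 => ha (by simp [hge, h0])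
    have hwb : w b ≠ 0 := fun h0 => hb (by simp [hge, h0])
    have : φ (φ a) = φ (φ b) := congrArg φ h
    simpa [hφ a hwa, hφ b hwb] using this
  · intro α hα
    have hwa : w α ≠ 0 := fun h0 => hα (by simp [hfe, h0])
    have hwfa : w (φ α) ≠ 0 := by
      intro h0
      apply hwa
      rw [hconj α hwa, h0, map_zero]
    refine ⟨⟨φ α, ?_⟩, (hφ α hwa)⟩
    intro h0
    apply hα
    rw [hfe]
    rw [hge, hφ α hwa] at h0
    rcases mul_eq_zero.1 h0 with h1 | h2
    · simp [show x (φ α) = 0 from by simpa using h1]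
    · rcases mul_eq_zero.1 h2 with h3 | h4
      · exact absurd h3 hwfa
      · simp [h4]
  · rintro ⟨b, hb⟩
    have hwb : w b ≠ 0 := fun h0 => hb (by simp [hge, h0])
    rw [hfe, hge, hφ b hwb, ← hconj b hwb]
    ring
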